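/- Strict monotonicity implies a unique fixed point and exponential attraction: under the hypotheses that A : ℝ^d → ℝ^d is Lipschitz and 2⟨x − y, A(x) − A(y)⟩ ≤ −λ|x − y|² for all x, y with λ > 0, the flow φ(·,t) of X' = A(X) has a unique stationary point x* (with A(x*) = 0) and |φ(x,t) − x*| ≤ e^{−λt/2}|x − x*| for all x ∈ ℝ^d and t ≥ 0. -/

import Mathlib

open scoped RealInnerProductSpace

set_option maxHeartbeats 1000000 in
/-- Strict monotonicity implies a unique fixed point and exponential attraction: if
`A : ℝ^d → ℝ^d` is Lipschitz and `2⟪x − y, A x − A y⟫ ≤ −λ|x − y|²` for all `x, y` with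
`λ > 0`, then the flow `φ` of `X' = A(X)` has a unique stationary point `x*` (with
`A(x*) = 0`) and `|φ(x,t) − x*| ≤ e^{−λt/2}|x − x*|` for all `x` and `t ≥ 0`. -/
theorem unique_fixed_point_and_exponential_attraction (d : ℕ)
    (A : EuclideanSpace ℝ (Fin d) → EuclideanSpace ℝ (Fin d))
    (Klip : NNReal) (hlip : LipschitzWith Klip A)
    (lam : ℝ) (hlam : 0 < lam)
    (hmono : ∀ x y : EuclideanSpace ℝ (Fin d),
      2 * ⟪x - y, A x - A y⟫ ≤ -lam * ‖x - y‖ ^ 2)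
    (φ : EuclideanSpace ℝ (Fin d) → ℝ → EuclideanSpace ℝ (Fin d))
    (hφ0 : ∀ x, φ x 0 = x)
    (hφ : ∀ x t, HasDerivAt (φ x) (A (φ x t)) t) :
    ∃ xstar : EuclideanSpace ℝ (Fin d), A xstar = 0 ∧
      (∀ y, A y = 0 → y = xstar) ∧
      ∀ (x : EuclideanSpace ℝ (Fin d)) (t : ℝ), 0 ≤ t →
        ‖φ x t - xstar‖ ≤ Real.exp (-(lam * t) / 2) * ‖x - xstar‖ := by
  classical
  set K : ℝ := (Klip : ℝ) with hKdef
  have hK0 : 0 ≤ K := Klip.coe_nonneg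
  set D : ℝ := 2 * (K ^ 2 + 1) + lam ^ 2 with hDdef
  have hDpos : 0 < D := by positivity
  set c : ℝ := lam / D with hcdef
  have hcpos : 0 < c := by positivity
  have hcK : c * K ^ 2 ≤ lam / 2 := by
    rw [hcdef, div_mul_eq_mul_div, div_le_iff₀ hDpos]
    nlinarith [sq_nonneg K, sq_nonneg lam, hlam.le]
  have hclam : c * lam ≤ 1 := by
    rw [hcdef, div_mul_eq_mul_div, div_le_one hDpos]
    nlinarith [sq_nonneg K]
  set q : ℝ := 1 - c * lam / 2 with hqdef
  have hq0 : 0 ≤ q := by rw [hqdef]; linarith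
  have hq1 : q < 1 := by rw [hqdef]; nlinarith
  set f : EuclideanSpace ℝ (Fin d) → EuclideanSpace ℝ (Fin d) :=
    fun x => x + c • A x with hfdef
  -- squared contraction estimate
  have hsq : ∀ x y, ‖f x - f y‖ ^ 2 ≤ q * ‖x - y‖ ^ 2 := by
    intro x y
    have hfxy : f x - f y = (x - y) + c • (A x - A y) := by
      rw [hfdef]; simp only [smul_sub]; abel
    have hAb : ‖A x - A y‖ ≤ K * ‖x - y‖ := by
      have := hlip.dist_le_mul x y
      rwa [dist_eq_norm, dist_eq_norm] at this
    have hmn := hmono x y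
    rw [hfxy, norm_add_sq_real, real_inner_smul_right, norm_smul, Real.norm_eq_abs,
      abs_of_pos hcpos]
    have hA2 : ‖A x - A y‖ ^ 2 ≤ K ^ 2 * ‖x - y‖ ^ 2 := by
      have := mul_self_le_mul_self (norm_nonneg _) hAb
      nlinarith [norm_nonneg (A x - A y)]
    have h1 : 2 * (c * ⟪x - y, A x - A y⟫) ≤ c * (-lam * ‖x - y‖ ^ 2) := by
      calc 2 * (c * ⟪x - y, A x - A y⟫) = c * (2 * ⟪x - y, A x - A y⟫) := by ring
        _ ≤ c * (-lam * ‖x - y‖ ^ 2) := by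
            exact mul_le_mul_of_nonneg_left hmn hcpos.le
    have h2 : c ^ 2 * ‖A x - A y‖ ^ 2 ≤ c * lam / 2 * ‖x - y‖ ^ 2 := by
      have ha := mul_le_mul_of_nonneg_left hA2 (sq_nonneg c)
      have hb := mul_le_mul_of_nonneg_right hcK
        (mul_nonneg hcpos.le (sq_nonneg ‖x - y‖))
      nlinarith [ha, hb]
    rw [hqdef, mul_pow]
    nlinarith [h1, h2]
  -- contraction
  have hdist : ∀ x y, dist (f x) (f y) ≤ Real.sqrt q * dist x y := by
    intro x y
    rw [dist_eq_norm, dist_eq_norm]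
    calc ‖f x - f y‖ = Real.sqrt (‖f x - f y‖ ^ 2) := (Real.sqrt_sq (norm_nonneg _)).symm
      _ ≤ Real.sqrt (q * ‖x - y‖ ^ 2) := Real.sqrt_le_sqrt (hsq x y)
      _ = Real.sqrt q * ‖x - y‖ := by
          rw [Real.sqrt_mul hq0, Real.sqrt_sq (norm_nonneg _)]
  have hsqrtq0 : 0 ≤ Real.sqrt q := Real.sqrt_nonneg q
  have hcontr : ContractingWith (Real.toNNReal (Real.sqrt q)) f := by
    constructor
    · rw [← NNReal.coe_lt_coe, Real.coe_toNNReal _ hsqrtq0]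
      calc Real.sqrt q < Real.sqrt 1 := Real.sqrt_lt_sqrt hq0 hq1
        _ = 1 := Real.sqrt_one
    · apply LipschitzWith.of_dist_le_mul
      intro x y
      rw [Real.coe_toNNReal _ hsqrtq0]
      exact hdist x y
  obtain ⟨xstar, hfix⟩ := hcontr.exists_fixedPoint 0 (by simp [edist_ne_top])
  have hfixpt : f xstar = xstar := hfix.1
  have hAstar : A xstar = 0 := by
    have h1 : xstar + c • A xstar = xstar := hfixpt
    have h2 : c • A xstar = 0 := by
      have := h1
      rwa [add_eq_left] at this
    rcases smul_eq_zero.mp h2 with h | h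
    · exact absurd h hcpos.ne'
    · exact h
  refine ⟨xstar, hAstar, ?_, ?_⟩
  · -- uniqueness
    intro y hy
    have := hmono y xstar
    rw [hy, hAstar, sub_zero, inner_zero_right, mul_zero] at this
    have hnn : ‖y - xstar‖ ^ 2 ≤ 0 := by nlinarith
    have : ‖y - xstar‖ = 0 := by nlinarith [sq_nonneg ‖y - xstar‖, norm_nonneg (y - xstar)]
    have := norm_eq_zero.mp this
    exact sub_eq_zero.mp this
  · -- exponential attraction
    intro x t ht
    set u : ℝ → EuclideanSpace ℝ (Fin d) := fun s => φ x s - xstar with hudef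
    have hu : ∀ s, HasDerivAt u (A (φ x s)) s := fun s => (hφ x s).sub_const _
    set g : ℝ → ℝ := fun s => ⟪u s, u s⟫ with hgdef
    have hg : ∀ s, HasDerivAt g (2 * ⟪u s, A (φ x s)⟫) s := by
      intro s
      have := (hu s).inner ℝ (hu s)
      refine this.congr_deriv ?_
      rw [real_inner_comm]; ring
    set h : ℝ → ℝ := fun s => Real.exp (lam * s) * g s with hhdef
    have hexp : ∀ s : ℝ, HasDerivAt (fun s => Real.exp (lam * s)) (lam * Real.exp (lam * s)) s := by
      intro s
      have h1 : HasDerivAt (fun s : ℝ => lam * s) lam s := by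
        simpa using (hasDerivAt_id s).const_mul lam
      simpa [mul_comm] using h1.exp
    have hh : ∀ s, HasDerivAt h
        (Real.exp (lam * s) * (lam * g s + 2 * ⟪u s, A (φ x s)⟫)) s := by
      intro s
      have := (hexp s).mul (hg s)
      refine this.congr_deriv ?_
      ring
    have hderiv_nonpos : ∀ s, Real.exp (lam * s) * (lam * g s + 2 * ⟪u s, A (φ x s)⟫) ≤ 0 := by
      intro s
      have hm := hmono (φ x s) xstar
      rw [hAstar, sub_zero] at hm
      have hgs : g s = ‖φ x s - xstar‖ ^ 2 := by
        rw [hgdef, hudef]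
        exact real_inner_self_eq_norm_sq _
      have hkey : lam * g s + 2 * ⟪u s, A (φ x s)⟫ ≤ 0 := by
        rw [hgs, hudef]
        nlinarith
      exact mul_nonpos_of_nonneg_of_nonpos (Real.exp_pos _).le hkey
    have hanti : Antitone h := by
      apply antitone_of_deriv_nonpos
      · exact fun s => (hh s).differentiableAt
      · intro s
        rw [(hh s).deriv]
        exact hderiv_nonpos s
    have hht := hanti ht
    have hh0 : h 0 = ‖x - xstar‖ ^ 2 := by
      rw [hhdef]
      simp only [mul_zero, Real.exp_zero, one_mul, hgdef, hudef, hφ0]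
      exact real_inner_self_eq_norm_sq _
    have hhte : h t = Real.exp (lam * t) * ‖φ x t - xstar‖ ^ 2 := by
      simp only [hhdef, hgdef, hudef, real_inner_self_eq_norm_sq]
    have hmain : Real.exp (lam * t) * ‖φ x t - xstar‖ ^ 2 ≤ ‖x - xstar‖ ^ 2 := by
      rw [← hhte, ← hh0]; exact hht
    have hsq2 : ‖φ x t - xstar‖ ^ 2 ≤ (Real.exp (-(lam * t) / 2) * ‖x - xstar‖) ^ 2 := by
      have he : (Real.exp (-(lam * t) / 2)) ^ 2 = Real.exp (-(lam * t)) := by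
        rw [sq, ← Real.exp_add]; ring_nf
      rw [mul_pow, he, Real.exp_neg, inv_mul_eq_div, le_div_iff₀ (Real.exp_pos _)]
      linarith [hmain, mul_comm (Real.exp (lam * t)) (‖φ x t - xstar‖ ^ 2)]
    calc ‖φ x t - xstar‖ = Real.sqrt (‖φ x t - xstar‖ ^ 2) := (Real.sqrt_sq (norm_nonneg _)).symm
      _ ≤ Real.sqrt ((Real.exp (-(lam * t) / 2) * ‖x - xstar‖) ^ 2) := Real.sqrt_le_sqrt hsq2
      _ = Real.exp (-(lam * t) / 2) * ‖x - xstar‖ := Real.sqrt_sq (by positivity)
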